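/- Let (Ω, 𝔉, P) be a probability space, α ∈ [0,1], and β : Ω → ℝ a Bernoulli random variable with parameter α. Let e, w : Ω → ℝⁿ and v, v₋ : Ω → ℝᵐ be square-integrable random vectors with E[e] = 0, E[w] = 0, E[v] = 0, E[v₋] = 0, second moments E[e eᵀ] = Σ, E[w wᵀ] = Q, E[v vᵀ] = R, E[v₋ v₋ᵀ] = R₋, cross moments E[e wᵀ] = Q, E[v v₋ᵀ] = 0, E[e vᵀ] = 0, E[e v₋ᵀ] = 0, E[w vᵀ] = 0, E[w v₋ᵀ] = 0, where Q is symmetric, and suppose β is independent of the tuple (e, w, v, v₋). Let C be an m×n matrix, θ an m×n matrix, x̂ ∈ ℝⁿ a fixed vector, and define x := x̂ + e and y := (1−β)(C x + v) + β(θ(x − w) + v₋). Then the covariance of y satisfies: E[(y − E y)(y − E y)ᵀ] = (1−α) C Σ Cᵀ + α θ Σ θᵀ + α R₋ + (1−α) R − α θ Q θᵀ + α(1−α)(θ − C) x̂ x̂ᵀ (θ − C)ᵀ. -/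

import Mathlib

open MeasureTheory Matrix ProbabilityTheory
open scoped ENNReal

/-- Cross second-moment matrix `E[u zᵀ]` (entrywise integrals). -/
noncomputable def crossMoment {Ω : Type*} [MeasurableSpace Ω] (P : Measure Ω)
    {d₁ d₂ : ℕ} (u : Ω → (Fin d₁ → ℝ)) (z : Ω → (Fin d₂ → ℝ)) :
    Matrix (Fin d₁) (Fin d₂) ℝ :=
  Matrix.of fun i j => ∫ ω, u ω i * z ω j ∂P

section aux
variable {Ω : Type*} [MeasurableSpace Ω] {P : Measure Ω}

lemma mul_integrable2 {f g : Ω → ℝ} (hf : MemLp f 2 P) (hg : MemLp g 2 P) :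
    Integrable (fun ω => f ω * g ω) P := by
  have h : (1 : ℝ≥0∞) / 1 = 1 / 2 + 1 / 2 := by
    rw [div_one, ENNReal.add_halves]
  have h2 : MemLp (f • g) 1 P := hg.smul hf
  rw [memLp_one_iff_integrable] at h2
  exact h2

lemma integral_sum_mul_right {ι : Type*} [Fintype ι] (a : ι → ℝ) (f : Ω → ι → ℝ) (g : Ω → ℝ)
    (hf : ∀ k, MemLp (fun ω => f ω k) 2 P) (hg : MemLp g 2 P) :
    ∫ ω, (∑ k, a k * f ω k) * g ω ∂P = ∑ k, a k * ∫ ω, f ω k * g ω ∂P := by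
  have h : ∀ ω, (∑ k, a k * f ω k) * g ω = ∑ k, a k * (f ω k * g ω) := by
    intro ω; rw [Finset.sum_mul]; exact Finset.sum_congr rfl fun k _ => by ring
  simp_rw [h]
  rw [integral_finset_sum _ fun k _ => (mul_integrable2 (hf k) hg).const_mul _]
  exact Finset.sum_congr rfl fun k _ => integral_const_mul _ _

lemma integral_sum_mul_sum {ι κ : Type*} [Fintype ι] [Fintype κ] (a : ι → ℝ) (b : κ → ℝ)
    (f : Ω → ι → ℝ) (g : Ω → κ → ℝ)
    (hf : ∀ k, MemLp (fun ω => f ω k) 2 P) (hg : ∀ l, MemLp (fun ω => g ω l) 2 P) :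
    ∫ ω, (∑ k, a k * f ω k) * (∑ l, b l * g ω l) ∂P
      = ∑ k, ∑ l, a k * b l * ∫ ω, f ω k * g ω l ∂P := by
  have h : ∀ ω, (∑ k, a k * f ω k) * (∑ l, b l * g ω l)
      = ∑ k, ∑ l, a k * b l * (f ω k * g ω l) := by
    intro ω; rw [Finset.sum_mul_sum]
    exact Finset.sum_congr rfl fun k _ => Finset.sum_congr rfl fun l _ => by ring
  simp_rw [h]
  rw [integral_finset_sum _ fun k _ =>
    integrable_finset_sum _ fun l _ => (mul_integrable2 (hf k) (hg l)).const_mul _]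
  refine Finset.sum_congr rfl fun k _ => ?_
  rw [integral_finset_sum _ fun l _ => (mul_integrable2 (hf k) (hg l)).const_mul _]
  exact Finset.sum_congr rfl fun l _ => integral_const_mul _ _

end aux

/-- Covariance of the randomly one-step-delayed measurement. -/
theorem delayed_measurement_covariance (n m : ℕ)
    {Ω : Type*} [MeasurableSpace Ω] (P : Measure Ω) [IsProbabilityMeasure P]
    (α : ℝ) (hα0 : 0 ≤ α) (hα1 : α ≤ 1)
    (β : Ω → ℝ) (hβmeas : Measurable β)
    (hβ01 : ∀ ω, β ω = 0 ∨ β ω = 1)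
    (hβα : P {ω | β ω = 1} = ENNReal.ofReal α)
    (e w : Ω → (Fin n → ℝ)) (v vm : Ω → (Fin m → ℝ))
    (hemeas : Measurable e) (hwmeas : Measurable w)
    (hvmeas : Measurable v) (hvmmeas : Measurable vm)
    (he2 : MemLp e 2 P) (hw2 : MemLp w 2 P)
    (hv2 : MemLp v 2 P) (hvm2 : MemLp vm 2 P)
    (hezero : (∫ ω, e ω ∂P) = 0) (hwzero : (∫ ω, w ω ∂P) = 0)
    (hvzero : (∫ ω, v ω ∂P) = 0) (hvmzero : (∫ ω, vm ω ∂P) = 0)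
    (Sig Q : Matrix (Fin n) (Fin n) ℝ) (R Rm : Matrix (Fin m) (Fin m) ℝ)
    (hee : crossMoment P e e = Sig) (hww : crossMoment P w w = Q)
    (hvv : crossMoment P v v = R) (hvmvm : crossMoment P vm vm = Rm)
    (hew : crossMoment P e w = Q) (hvvm : crossMoment P v vm = 0)
    (hev : crossMoment P e v = 0) (hevm : crossMoment P e vm = 0)
    (hwv : crossMoment P w v = 0) (hwvm : crossMoment P w vm = 0)
    (hQSymm : Q.IsSymm)
    (hindep : IndepFun β (fun ω => (e ω, w ω, v ω, vm ω)) P)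
    (C θ : Matrix (Fin m) (Fin n) ℝ) (xhat : Fin n → ℝ)
    (x : Ω → (Fin n → ℝ)) (hx : x = fun ω => xhat + e ω)
    (y : Ω → (Fin m → ℝ))
    (hy : y = fun ω => (1 - β ω) • (C.mulVec (x ω) + v ω)
                      + β ω • (θ.mulVec (x ω - w ω) + vm ω)) :
    crossMoment P (fun ω => y ω - ∫ ω', y ω' ∂P) (fun ω => y ω - ∫ ω', y ω' ∂P) =
      (1 - α) • (C * Sig * Cᵀ) + α • (θ * Sig * θᵀ) + α • Rm + (1 - α) • R
        - α • (θ * Q * θᵀ)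
        + (α * (1 - α)) • ((θ - C) * Matrix.vecMulVec xhat xhat * (θ - C)ᵀ) := by
  classical
  -- component-level ℒ² facts
  have hek2 : ∀ k, MemLp (fun ω => e ω k) 2 P :=
    fun k => (ContinuousLinearMap.proj (R := ℝ) (φ := fun _ : Fin n => ℝ) k).comp_memLp' he2
  have hwk2 : ∀ k, MemLp (fun ω => w ω k) 2 P :=
    fun k => (ContinuousLinearMap.proj (R := ℝ) (φ := fun _ : Fin n => ℝ) k).comp_memLp' hw2
  have hvk2 : ∀ i, MemLp (fun ω => v ω i) 2 P :=
    fun i => (ContinuousLinearMap.proj (R := ℝ) (φ := fun _ : Fin m => ℝ) i).comp_memLp' hv2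
  have hvmk2 : ∀ i, MemLp (fun ω => vm ω i) 2 P :=
    fun i => (ContinuousLinearMap.proj (R := ℝ) (φ := fun _ : Fin m => ℝ) i).comp_memLp' hvm2
  have one_le_two' : (1 : ℝ≥0∞) ≤ 2 := one_le_two
  -- component means vanish
  have heIk : ∀ k, ∫ ω, e ω k ∂P = 0 := by
    intro k
    have h := (ContinuousLinearMap.proj (R := ℝ) (φ := fun _ : Fin n => ℝ) k).integral_comp_comm
      (he2.integrable one_le_two')
    simpa [hezero] using h
  have hwIk : ∀ k, ∫ ω, w ω k ∂P = 0 := by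
    intro k
    have h := (ContinuousLinearMap.proj (R := ℝ) (φ := fun _ : Fin n => ℝ) k).integral_comp_comm
      (hw2.integrable one_le_two')
    simpa [hwzero] using h
  have hvIk : ∀ i, ∫ ω, v ω i ∂P = 0 := by
    intro i
    have h := (ContinuousLinearMap.proj (R := ℝ) (φ := fun _ : Fin m => ℝ) i).integral_comp_comm
      (hv2.integrable one_le_two')
    simpa [hvzero] using h
  have hvmIk : ∀ i, ∫ ω, vm ω i ∂P = 0 := by
    intro i
    have h := (ContinuousLinearMap.proj (R := ℝ) (φ := fun _ : Fin m => ℝ) i).integral_comp_comm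
      (hvm2.integrable one_le_two')
    simpa [hvmzero] using h
  -- cross-moment components
  have hcm : ∀ {d₁ d₂ : ℕ} (u : Ω → Fin d₁ → ℝ) (z : Ω → Fin d₂ → ℝ)
      (M : Matrix (Fin d₁) (Fin d₂) ℝ), crossMoment P u z = M →
      ∀ i j, ∫ ω, u ω i * z ω j ∂P = M i j := by
    intro d₁ d₂ u z M h i j
    rw [← h]; rfl
  have hSigkl := hcm e e Sig hee
  have hQkl := hcm e w Q hew
  have hQwkl := hcm w w Q hww
  have hRkl := hcm v v R hvv
  have hRmkl := hcm vm vm Rm hvmvm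
  have hevkl := hcm e v 0 hev
  have hevmkl := hcm e vm 0 hevm
  have hwvkl := hcm w v 0 hwv
  have hwvmkl := hcm w vm 0 hwvm
  have hvvmkl := hcm v vm 0 hvvm
  -- β facts
  have hβbd : ∀ ω, ‖β ω‖ ≤ 1 := by
    intro ω; rcases hβ01 ω with h | h <;> simp [h]
  have hβtop : MemLp β ⊤ P := memLp_top_of_bound hβmeas.aestronglyMeasurable 1 (ae_of_all _ hβbd)
  have hβint : Integrable β P := hβtop.integrable le_top
  have hβI : ∫ ω, β ω ∂P = α := by
    have hset : MeasurableSet {ω | β ω = 1} := hβmeas (measurableSet_singleton 1)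
    have hind : β = Set.indicator {ω | β ω = 1} (fun _ => (1 : ℝ)) := by
      funext ω
      rcases hβ01 ω with h | h
      · simp [Set.indicator_apply, Set.mem_setOf_eq, h]
      · simp [Set.indicator_apply, Set.mem_setOf_eq, h]
    rw [hind, integral_indicator_const (1 : ℝ) hset, measureReal_def, hβα, ENNReal.toReal_ofReal hα0,
      smul_eq_mul, mul_one]
  -- the independence workhorse
  set Z : Ω → (Fin n → ℝ) × (Fin n → ℝ) × (Fin m → ℝ) × (Fin m → ℝ) :=
    fun ω => (e ω, w ω, v ω, vm ω) with hZdef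
  have key : ∀ F : (Fin n → ℝ) × (Fin n → ℝ) × (Fin m → ℝ) × (Fin m → ℝ) → ℝ,
      Measurable F → Integrable (fun ω => F (Z ω)) P →
      ∫ ω, β ω * F (Z ω) ∂P = α * ∫ ω, F (Z ω) ∂P := by
    intro F hFm hFi
    have hind : IndepFun β (fun ω => F (Z ω)) P := hindep.comp measurable_id hFm
    have h := hind.integral_mul_eq_mul_integral hβmeas.aestronglyMeasurable hFi.aestronglyMeasurable
    simpa [hβI, Pi.mul_apply] using h
  -- scalar families
  set a : Fin m → ℝ := fun i => ∑ k, C i k * xhat k with hadef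
  set b : Fin m → ℝ := fun i => ∑ k, θ i k * xhat k with hbdef
  set c : Fin m → ℝ := fun i => b i - a i with hcdef
  set A : Ω → Fin m → ℝ := fun ω i => (∑ k, C i k * e ω k) + v ω i with hAdef
  set B : Ω → Fin m → ℝ := fun ω i => (∑ k, θ i k * (e ω k - w ω k)) + vm ω i with hBdef
  have hewk2 : ∀ k, MemLp (fun ω => e ω k - w ω k) 2 P := fun k => (hek2 k).sub (hwk2 k)
  have hA2 : ∀ i, MemLp (fun ω => A ω i) 2 P := by
    intro i
    exact (memLp_finset_sum _ fun k _ => (hek2 k).const_mul _).add (hvk2 i)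
  have hB2 : ∀ i, MemLp (fun ω => B ω i) 2 P := by
    intro i
    exact (memLp_finset_sum _ fun k _ => (hewk2 k).const_mul _).add (hvmk2 i)
  have hAint : ∀ i, Integrable (fun ω => A ω i) P := fun i => (hA2 i).integrable one_le_two'
  have hBint : ∀ i, Integrable (fun ω => B ω i) P := fun i => (hB2 i).integrable one_le_two'
  have hIA : ∀ i, ∫ ω, A ω i ∂P = 0 := by
    intro i
    have h1 : Integrable (fun ω => ∑ k, C i k * e ω k) P :=
      integrable_finset_sum _ fun k _ => ((hek2 k).integrable one_le_two').const_mul _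
    rw [hAdef]
    rw [integral_add h1 ((hvk2 i).integrable one_le_two'),
      integral_finset_sum _ fun k _ => ((hek2 k).integrable one_le_two').const_mul _]
    simp [integral_const_mul, heIk, hvIk]
  have hIB : ∀ i, ∫ ω, B ω i ∂P = 0 := by
    intro i
    have h1 : Integrable (fun ω => ∑ k, θ i k * (e ω k - w ω k)) P :=
      integrable_finset_sum _ fun k _ => ((hewk2 k).integrable one_le_two').const_mul _
    rw [hBdef]
    rw [integral_add h1 ((hvmk2 i).integrable one_le_two'),
      integral_finset_sum _ fun k _ => ((hewk2 k).integrable one_le_two').const_mul _]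
    have : ∀ k, ∫ ω, e ω k - w ω k ∂P = 0 := by
      intro k
      rw [integral_sub ((hek2 k).integrable one_le_two') ((hwk2 k).integrable one_le_two'),
        heIk, hwIk, sub_zero]
    simp [integral_const_mul, this, hvmIk]
  -- second moments of A and B
  have hIAA : ∀ i j, ∫ ω, A ω i * A ω j ∂P = (C * Sig * Cᵀ) i j + R i j := by
    intro i j
    have hS2 : ∀ i, MemLp (fun ω => ∑ k, C i k * e ω k) 2 P :=
      fun i => memLp_finset_sum _ fun k _ => (hek2 k).const_mul _
    have hexp : ∀ ω, A ω i * A ω j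
        = (∑ k, C i k * e ω k) * (∑ l, C j l * e ω l)
          + ((∑ k, C i k * e ω k) * v ω j + (v ω i * (∑ l, C j l * e ω l) + v ω i * v ω j)) := by
      intro ω; rw [hAdef]; ring
    simp_rw [hexp]
    have iSS : Integrable (fun ω => (∑ k, C i k * e ω k) * (∑ l, C j l * e ω l)) P :=
      mul_integrable2 (hS2 i) (hS2 j)
    have iSv : Integrable (fun ω => (∑ k, C i k * e ω k) * v ω j) P :=
      mul_integrable2 (hS2 i) (hvk2 j)
    have ivS : Integrable (fun ω => v ω i * (∑ l, C j l * e ω l)) P :=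
      mul_integrable2 (hvk2 i) (hS2 j)
    have ivv : Integrable (fun ω => v ω i * v ω j) P := mul_integrable2 (hvk2 i) (hvk2 j)
    have i34 : Integrable (fun ω => v ω i * (∑ l, C j l * e ω l) + v ω i * v ω j) P :=
      ivS.add ivv
    have i234 : Integrable (fun ω => (∑ k, C i k * e ω k) * v ω j
        + (v ω i * (∑ l, C j l * e ω l) + v ω i * v ω j)) P := iSv.add i34
    rw [integral_add iSS i234, integral_add iSv i34, integral_add ivS ivv]
    have h1 : ∫ ω, (∑ k, C i k * e ω k) * (∑ l, C j l * e ω l) ∂P = (C * Sig * Cᵀ) i j := by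
      rw [integral_sum_mul_sum _ _ _ _ hek2 hek2]
      simp only [Matrix.mul_apply, Matrix.transpose_apply, Finset.sum_mul]
      rw [Finset.sum_comm]
      refine Finset.sum_congr rfl fun k _ => Finset.sum_congr rfl fun l _ => ?_
      rw [hSigkl]; ring
    have h2 : ∫ ω, (∑ k, C i k * e ω k) * v ω j ∂P = 0 := by
      rw [integral_sum_mul_right _ _ _ hek2 (hvk2 j)]
      simp [hevkl]
    have h3 : ∫ ω, v ω i * (∑ l, C j l * e ω l) ∂P = 0 := by
      have hcomm : ∀ ω, v ω i * (∑ l, C j l * e ω l) = (∑ l, C j l * e ω l) * v ω i := by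
        intro ω; ring
      simp_rw [hcomm]
      rw [integral_sum_mul_right _ _ _ hek2 (hvk2 i)]
      simp [hevkl]
    have h4 : ∫ ω, v ω i * v ω j ∂P = R i j := hRkl i j
    rw [h1, h2, h3, h4]; ring
  have hIBB : ∀ i j, ∫ ω, B ω i * B ω j ∂P
      = ((θ * Sig * θᵀ) i j - (θ * Q * θᵀ) i j) + Rm i j := by
    intro i j
    have hS2 : ∀ i, MemLp (fun ω => ∑ k, θ i k * (e ω k - w ω k)) 2 P :=
      fun i => memLp_finset_sum _ fun k _ => (hewk2 k).const_mul _
    have hexp : ∀ ω, B ω i * B ω j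
        = (∑ k, θ i k * (e ω k - w ω k)) * (∑ l, θ j l * (e ω l - w ω l))
          + ((∑ k, θ i k * (e ω k - w ω k)) * vm ω j
            + (vm ω i * (∑ l, θ j l * (e ω l - w ω l)) + vm ω i * vm ω j)) := by
      intro ω; rw [hBdef]; ring
    simp_rw [hexp]
    have iSS : Integrable (fun ω => (∑ k, θ i k * (e ω k - w ω k)) * (∑ l, θ j l * (e ω l - w ω l))) P :=
      mul_integrable2 (hS2 i) (hS2 j)
    have iSv : Integrable (fun ω => (∑ k, θ i k * (e ω k - w ω k)) * vm ω j) P :=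
      mul_integrable2 (hS2 i) (hvmk2 j)
    have ivS : Integrable (fun ω => vm ω i * (∑ l, θ j l * (e ω l - w ω l))) P :=
      mul_integrable2 (hvmk2 i) (hS2 j)
    have ivv : Integrable (fun ω => vm ω i * vm ω j) P := mul_integrable2 (hvmk2 i) (hvmk2 j)
    have i34 : Integrable (fun ω => vm ω i * (∑ l, θ j l * (e ω l - w ω l)) + vm ω i * vm ω j) P :=
      ivS.add ivv
    have i234 : Integrable (fun ω => (∑ k, θ i k * (e ω k - w ω k)) * vm ω j
        + (vm ω i * (∑ l, θ j l * (e ω l - w ω l)) + vm ω i * vm ω j)) P := iSv.add i34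
    rw [integral_add iSS i234, integral_add iSv i34, integral_add ivS ivv]
    have hewew : ∀ k l, ∫ ω, (e ω k - w ω k) * (e ω l - w ω l) ∂P = Sig k l - Q k l := by
      intro k l
      have hexp2 : ∀ ω, (e ω k - w ω k) * (e ω l - w ω l)
          = e ω k * e ω l - e ω k * w ω l - w ω k * e ω l + w ω k * w ω l := by
        intro ω; ring
      simp_rw [hexp2]
      have i1 : Integrable (fun ω => e ω k * e ω l) P := mul_integrable2 (hek2 k) (hek2 l)
      have i2 : Integrable (fun ω => e ω k * w ω l) P := mul_integrable2 (hek2 k) (hwk2 l)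
      have i3 : Integrable (fun ω => w ω k * e ω l) P := mul_integrable2 (hwk2 k) (hek2 l)
      have i4 : Integrable (fun ω => w ω k * w ω l) P := mul_integrable2 (hwk2 k) (hwk2 l)
      have i12 : Integrable (fun ω => e ω k * e ω l - e ω k * w ω l) P := i1.sub i2
      have i123 : Integrable (fun ω => e ω k * e ω l - e ω k * w ω l - w ω k * e ω l) P :=
        i12.sub i3
      rw [integral_add i123 i4, integral_sub i12 i3, integral_sub i1 i2]
      have hwe : ∫ ω, w ω k * e ω l ∂P = Q l k := by
        have : ∀ ω, w ω k * e ω l = e ω l * w ω k := fun ω => mul_comm _ _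
        simp_rw [this]; exact hQkl l k
      rw [hSigkl, hQkl, hwe, hQwkl]
      have hQsym : Q l k = Q k l := by
        have := congrFun (congrFun hQSymm k) l
        simpa [Matrix.transpose_apply] using this
      rw [hQsym]; ring
    have h1 : ∫ ω, (∑ k, θ i k * (e ω k - w ω k)) * (∑ l, θ j l * (e ω l - w ω l)) ∂P
        = (θ * Sig * θᵀ) i j - (θ * Q * θᵀ) i j := by
      rw [integral_sum_mul_sum _ _ _ _ hewk2 hewk2]
      simp only [Matrix.mul_apply, Matrix.transpose_apply, Finset.sum_mul,
        ← Finset.sum_sub_distrib]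
      rw [Finset.sum_comm]
      refine Finset.sum_congr rfl fun k _ => Finset.sum_congr rfl fun l _ => ?_
      rw [hewew]; ring
    have h2 : ∫ ω, (∑ k, θ i k * (e ω k - w ω k)) * vm ω j ∂P = 0 := by
      rw [integral_sum_mul_right _ _ _ hewk2 (hvmk2 j)]
      have : ∀ k, ∫ ω, (e ω k - w ω k) * vm ω j ∂P = 0 := by
        intro k
        have hexp3 : ∀ ω, (e ω k - w ω k) * vm ω j = e ω k * vm ω j - w ω k * vm ω j := by
          intro ω; ring
        simp_rw [hexp3]
        rw [integral_sub (mul_integrable2 (hek2 k) (hvmk2 j))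
          (mul_integrable2 (hwk2 k) (hvmk2 j))]
        rw [hevmkl, hwvmkl]; simp
      simp [this]
    have h3 : ∫ ω, vm ω i * (∑ l, θ j l * (e ω l - w ω l)) ∂P = 0 := by
      have hcomm : ∀ ω, vm ω i * (∑ l, θ j l * (e ω l - w ω l))
          = (∑ l, θ j l * (e ω l - w ω l)) * vm ω i := fun ω => mul_comm _ _
      simp_rw [hcomm]
      rw [integral_sum_mul_right _ _ _ hewk2 (hvmk2 i)]
      have : ∀ k, ∫ ω, (e ω k - w ω k) * vm ω i ∂P = 0 := by
        intro k
        have hexp3 : ∀ ω, (e ω k - w ω k) * vm ω i = e ω k * vm ω i - w ω k * vm ω i := by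
          intro ω; ring
        simp_rw [hexp3]
        rw [integral_sub (mul_integrable2 (hek2 k) (hvmk2 i))
          (mul_integrable2 (hwk2 k) (hvmk2 i))]
        rw [hevmkl, hwvmkl]; simp
      simp [this]
    have h4 : ∫ ω, vm ω i * vm ω j ∂P = Rm i j := hRmkl i j
    rw [h1, h2, h3, h4]; ring
  -- measurability of the coordinate functionals on the product space
  have hFAm : ∀ i : Fin m, Measurable
      (fun p : (Fin n → ℝ) × (Fin n → ℝ) × (Fin m → ℝ) × (Fin m → ℝ) =>
        (∑ k, C i k * p.1 k) + p.2.2.1 i) := by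
    intro i
    apply Measurable.add
    · exact Finset.measurable_sum _ fun k _ =>
        ((measurable_pi_apply k).comp measurable_fst).const_mul _
    · exact (measurable_pi_apply i).comp (measurable_fst.comp (measurable_snd.comp measurable_snd))
  have hFBm : ∀ i : Fin m, Measurable
      (fun p : (Fin n → ℝ) × (Fin n → ℝ) × (Fin m → ℝ) × (Fin m → ℝ) =>
        (∑ k, θ i k * (p.1 k - p.2.1 k)) + p.2.2.2 i) := by
    intro i
    apply Measurable.add
    · exact Finset.measurable_sum _ fun k _ =>
        (((measurable_pi_apply k).comp measurable_fst).sub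
          ((measurable_pi_apply k).comp (measurable_fst.comp measurable_snd))).const_mul _
    · exact (measurable_pi_apply i).comp
        (measurable_snd.comp (measurable_snd.comp measurable_snd))
  -- pointwise form of y
  have hym : ∀ (i : Fin m) ω, y ω i = (a i + A ω i) + β ω * ((b i + B ω i) - (a i + A ω i)) := by
    intro i ω
    rw [hy, hx]
    simp only [Pi.add_apply, Pi.smul_apply, smul_eq_mul, Pi.sub_apply, Matrix.mulVec,
      dotProduct, hadef, hbdef, hAdef, hBdef, mul_add, mul_sub,
      Finset.sum_add_distrib, Finset.sum_sub_distrib]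
    ring
  -- mean of y, componentwise
  have hymean : ∀ i, ∫ ω, y ω i ∂P = (1 - α) * a i + α * b i := by
    intro i
    have hkey : ∫ ω, β ω * ((b i + B ω i) - (a i + A ω i)) ∂P
        = α * ∫ ω, ((b i + B ω i) - (a i + A ω i)) ∂P :=
      key (fun p => (b i + ((∑ k, θ i k * (p.1 k - p.2.1 k)) + p.2.2.2 i))
            - (a i + ((∑ k, C i k * p.1 k) + p.2.2.1 i)))
        ((measurable_const.add (hFBm i)).sub (measurable_const.add (hFAm i)))
        (((integrable_const _).add (hBint i)).sub ((integrable_const _).add (hAint i)))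
    have i1 : Integrable (fun ω => a i + A ω i) P := (integrable_const _).add (hAint i)
    have i1' : Integrable (fun ω => b i + B ω i) P := (integrable_const _).add (hBint i)
    have isub : Integrable (fun ω => (b i + B ω i) - (a i + A ω i)) P := i1'.sub i1
    have i2 : Integrable (fun ω => β ω * ((b i + B ω i) - (a i + A ω i))) P :=
      isub.bdd_mul (c := 1) hβmeas.aestronglyMeasurable (ae_of_all _ hβbd)
    simp_rw [hym i]
    rw [integral_add i1 i2, integral_add (integrable_const _) (hAint i), hkey,
      integral_sub i1' i1, integral_add (integrable_const _) (hBint i),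
      integral_add (integrable_const _) (hAint i), integral_const, integral_const,
      hIA i, hIB i]
    simp; ring
  -- integrability of vector-valued y
  have hxint : Integrable x P := by
    rw [hx]; exact (integrable_const xhat).add (he2.integrable one_le_two')
  have hyint : Integrable y P := by
    rw [hy]
    have L1 : Integrable (fun ω => C.mulVec (x ω) + v ω) P := by
      have h := (LinearMap.toContinuousLinearMap (Matrix.mulVecLin C)).integrable_comp hxint
      exact (h : Integrable (fun ω => C.mulVec (x ω)) P).add (hv2.integrable one_le_two')
    have L2 : Integrable (fun ω => θ.mulVec (x ω - w ω) + vm ω) P := by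
      have hsub : Integrable (fun ω => x ω - w ω) P := hxint.sub (hw2.integrable one_le_two')
      have h := (LinearMap.toContinuousLinearMap (Matrix.mulVecLin θ)).integrable_comp hsub
      exact (h : Integrable (fun ω => θ.mulVec (x ω - w ω)) P).add (hvm2.integrable one_le_two')
    have hβ1 : MemLp (fun ω => 1 - β ω) ⊤ P := (memLp_const 1).sub hβtop
    exact (L1.smul_of_top_right hβ1).add (L2.smul_of_top_right hβtop)
  have hmu : ∀ i, (∫ ω', y ω' ∂P) i = (1 - α) * a i + α * b i := by
    intro i
    have h := (ContinuousLinearMap.proj (R := ℝ) (φ := fun _ : Fin m => ℝ) i).integral_comp_comm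
      hyint
    exact h.symm.trans (hymean i)
  -- centered variable
  have hd : ∀ (i : Fin m) ω, (y ω - ∫ ω', y ω' ∂P) i
      = (β ω - α) * c i + ((1 - β ω) * A ω i + β ω * B ω i) := by
    intro i ω
    rw [Pi.sub_apply, hym i ω, hmu i, hcdef]
    ring
  -- entrywise computation
  refine Matrix.ext fun i j => ?_
  have hprod : ∀ ω, (y ω - ∫ ω', y ω' ∂P) i * (y ω - ∫ ω', y ω' ∂P) j
      = (α ^ 2 * (c i * c j) + A ω i * A ω j - α * (c i * A ω j + A ω i * c j))
        + β ω * ((1 - 2 * α) * (c i * c j)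
          + (B ω i * B ω j - A ω i * A ω j
            + (α * (c i * A ω j + A ω i * c j) + (1 - α) * (c i * B ω j + B ω i * c j)))) := by
    intro ω
    rw [hd i ω, hd j ω]
    rcases hβ01 ω with h | h <;> rw [h] <;> ring
  -- integrability pieces
  have iAA : Integrable (fun ω => A ω i * A ω j) P := mul_integrable2 (hA2 i) (hA2 j)
  have iBB : Integrable (fun ω => B ω i * B ω j) P := mul_integrable2 (hB2 i) (hB2 j)
  have iXA : Integrable (fun ω => c i * A ω j + A ω i * c j) P :=
    ((hAint j).const_mul _).add ((hAint i).mul_const _)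
  have iXB : Integrable (fun ω => c i * B ω j + B ω i * c j) P :=
    ((hBint j).const_mul _).add ((hBint i).mul_const _)
  have iSub : Integrable (fun ω => B ω i * B ω j - A ω i * A ω j) P := iBB.sub iAA
  have iXAa : Integrable (fun ω => α * (c i * A ω j + A ω i * c j)) P := iXA.const_mul α
  have iXBa : Integrable (fun ω => (1 - α) * (c i * B ω j + B ω i * c j)) P :=
    iXB.const_mul (1 - α)
  have iXsum : Integrable (fun ω => α * (c i * A ω j + A ω i * c j)
      + (1 - α) * (c i * B ω j + B ω i * c j)) P := iXAa.add iXBa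
  have iCA : Integrable (fun ω => α ^ 2 * (c i * c j) + A ω i * A ω j) P :=
    (integrable_const _).add iAA
  have iP1 : Integrable (fun ω =>
      α ^ 2 * (c i * c j) + A ω i * A ω j - α * (c i * A ω j + A ω i * c j)) P :=
    iCA.sub iXAa
  have iInner : Integrable (fun ω => B ω i * B ω j - A ω i * A ω j
      + (α * (c i * A ω j + A ω i * c j) + (1 - α) * (c i * B ω j + B ω i * c j))) P :=
    iSub.add iXsum
  have iBrk : Integrable (fun ω => (1 - 2 * α) * (c i * c j)
      + (B ω i * B ω j - A ω i * A ω j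
        + (α * (c i * A ω j + A ω i * c j) + (1 - α) * (c i * B ω j + B ω i * c j)))) P :=
    (integrable_const _).add iInner
  have iβBrk : Integrable (fun ω => β ω * ((1 - 2 * α) * (c i * c j)
      + (B ω i * B ω j - A ω i * A ω j
        + (α * (c i * A ω j + A ω i * c j) + (1 - α) * (c i * B ω j + B ω i * c j))))) P :=
    iBrk.bdd_mul (c := 1) hβmeas.aestronglyMeasurable (ae_of_all _ hβbd)
  -- integrals of the cross pieces vanish
  have hXA : ∫ ω, c i * A ω j + A ω i * c j ∂P = 0 := by
    rw [integral_add ((hAint j).const_mul _) ((hAint i).mul_const _),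
      integral_const_mul, integral_mul_const, hIA, hIA]
    ring
  have hXB : ∫ ω, c i * B ω j + B ω i * c j ∂P = 0 := by
    rw [integral_add ((hBint j).const_mul _) ((hBint i).mul_const _),
      integral_const_mul, integral_mul_const, hIB, hIB]
    ring
  -- independence step
  have hkeyB : ∫ ω, β ω * ((1 - 2 * α) * (c i * c j)
      + (B ω i * B ω j - A ω i * A ω j
        + (α * (c i * A ω j + A ω i * c j) + (1 - α) * (c i * B ω j + B ω i * c j)))) ∂P
      = α * ∫ ω, ((1 - 2 * α) * (c i * c j)
      + (B ω i * B ω j - A ω i * A ω j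
        + (α * (c i * A ω j + A ω i * c j) + (1 - α) * (c i * B ω j + B ω i * c j)))) ∂P :=
    key (fun p => (1 - 2 * α) * (c i * c j)
      + (((∑ k, θ i k * (p.1 k - p.2.1 k)) + p.2.2.2 i)
            * ((∑ k, θ j k * (p.1 k - p.2.1 k)) + p.2.2.2 j)
        - ((∑ k, C i k * p.1 k) + p.2.2.1 i) * ((∑ k, C j k * p.1 k) + p.2.2.1 j)
        + (α * (c i * ((∑ k, C j k * p.1 k) + p.2.2.1 j)
            + ((∑ k, C i k * p.1 k) + p.2.2.1 i) * c j)
          + (1 - α) * (c i * ((∑ k, θ j k * (p.1 k - p.2.1 k)) + p.2.2.2 j)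
            + ((∑ k, θ i k * (p.1 k - p.2.1 k)) + p.2.2.2 i) * c j))))
      (measurable_const.add ((((hFBm i).mul (hFBm j)).sub ((hFAm i).mul (hFAm j))).add
        (((((hFAm j).const_mul (c i)).add ((hFAm i).mul_const (c j))).const_mul α).add
          ((((hFBm j).const_mul (c i)).add ((hFBm i).mul_const (c j))).const_mul (1 - α)))))
      iBrk
  -- integral of the bracket
  have hBrkI : ∫ ω, ((1 - 2 * α) * (c i * c j)
      + (B ω i * B ω j - A ω i * A ω j
        + (α * (c i * A ω j + A ω i * c j) + (1 - α) * (c i * B ω j + B ω i * c j)))) ∂P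
      = (1 - 2 * α) * (c i * c j)
        + ((((θ * Sig * θᵀ) i j - (θ * Q * θᵀ) i j) + Rm i j)
          - ((C * Sig * Cᵀ) i j + R i j)) := by
    rw [integral_add (integrable_const _) iInner, integral_const,
      integral_add iSub iXsum, integral_sub iBB iAA,
      integral_add iXAa iXBa,
      integral_const_mul, integral_const_mul, hXA, hXB, hIAA, hIBB]
    simp
  -- integral of the first part
  have hP1I : ∫ ω, (α ^ 2 * (c i * c j) + A ω i * A ω j
      - α * (c i * A ω j + A ω i * c j)) ∂P
      = α ^ 2 * (c i * c j) + ((C * Sig * Cᵀ) i j + R i j) := by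
    rw [integral_sub iCA iXAa,
      integral_add (integrable_const _) iAA, integral_const, integral_const_mul, hXA, hIAA]
    simp
  -- the covariance entry
  have hcov : ∫ ω, (y ω - ∫ ω', y ω' ∂P) i * (y ω - ∫ ω', y ω' ∂P) j ∂P
      = α * (1 - α) * (c i * c j) + (1 - α) * ((C * Sig * Cᵀ) i j + R i j)
        + α * (((θ * Sig * θᵀ) i j - (θ * Q * θᵀ) i j) + Rm i j) := by
    simp_rw [hprod]
    rw [integral_add iP1 iβBrk, hkeyB, hBrkI, hP1I]
    ring
  -- c i * c j as a matrix entry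
  have hci : ∀ i, c i = ∑ k, (θ i k - C i k) * xhat k := by
    intro i
    rw [hcdef]
    simp only [hadef, hbdef, ← Finset.sum_sub_distrib]
    exact Finset.sum_congr rfl fun k _ => by ring
  have hccij : c i * c j = ((θ - C) * Matrix.vecMulVec xhat xhat * (θ - C)ᵀ) i j := by
    rw [hci i, hci j, Finset.sum_mul_sum]
    simp only [Matrix.mul_apply, Matrix.transpose_apply, Matrix.vecMulVec_apply,
      Matrix.sub_apply, Finset.sum_mul]
    rw [Finset.sum_comm]
    exact Finset.sum_congr rfl fun k _ => Finset.sum_congr rfl fun l _ => by ring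
  -- assemble
  show (∫ ω, (y ω - ∫ ω', y ω' ∂P) i * (y ω - ∫ ω', y ω' ∂P) j ∂P) = _
  rw [hcov]
  simp only [Matrix.add_apply, Matrix.sub_apply, Matrix.smul_apply, smul_eq_mul]
  rw [← hccij]
  ring
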